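/- Let S̄ = (S_0,…,S_n) and T̄ = (T_0,…,T_n) be n-slices of the finite group G. There exists a family of G-equivariant bijections (μ_i : G/S_i → G/T_i)_{0≤i≤n} commuting with the natural projections G/S_{i-1} → G/S_i and G/T_{i-1} → G/T_i if and only if S̄ and T̄ are conjugate, i.e. there exists g ∈ G with gS_ig⁻¹ = T_i for all i = 0,…,n. -/

import Mathlib

variable {G : Type*}

/-- The conjugate slice `ᵍS̄ = (gS₀g⁻¹, …, gSₙg⁻¹)`. -/
def sliceConj [Group G] {n : ℕ} (g : G) (S : Fin (n + 1) → Subgroup G) :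
    Fin (n + 1) → Subgroup G :=
  fun i => (S i).map (MulAut.conj g).toMonoidHom

/-- Natural projection `G/H → G/K` for `H ≤ K`. -/
def cosetProj [Group G] {H K : Subgroup G} (h : H ≤ K) : G ⧸ H → G ⧸ K :=
  Quotient.map' id fun a b hab => by
    rw [QuotientGroup.leftRel_apply] at hab ⊢
    exact h hab

lemma cosetProj_mk [Group G] {H K : Subgroup G} (h : H ≤ K) (x : G) :
    cosetProj h (QuotientGroup.mk x) = QuotientGroup.mk x := rfl

/-- Right translation by `g⁻¹` gives an equivalence `G ⧸ H ≃ G ⧸ K` when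
`gHg⁻¹ = K`. -/
def conjCosetEquiv [Group G] (g : G) {H K : Subgroup G}
    (h : H.map (MulAut.conj g).toMonoidHom = K) : G ⧸ H ≃ G ⧸ K where
  toFun := Quotient.map' (· * g⁻¹) (by
    intro a b hab
    rw [QuotientGroup.leftRel_apply] at hab ⊢
    have : g * (a⁻¹ * b) * g⁻¹ ∈ K := by
      rw [← h]; exact ⟨a⁻¹ * b, hab, rfl⟩
    convert this using 1
    group)
  invFun := Quotient.map' (· * g) (by
    intro a b hab
    rw [QuotientGroup.leftRel_apply] at hab ⊢
    rw [← h] at hab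
    obtain ⟨s, hs, hse⟩ := hab
    have : s = g⁻¹ * (a⁻¹ * b) * g := by
      have : (MulAut.conj g) s = a⁻¹ * b := hse
      rw [MulAut.conj_apply] at this
      rw [← this]; group
    convert hs using 1
    rw [this]; group
    exact Iff.rfl)
  left_inv := by
    intro q
    induction q using Quotient.inductionOn' with
    | h x => simp [Quotient.map'_mk'']
  right_inv := by
    intro q
    induction q using Quotient.inductionOn' with
    | h x => simp [Quotient.map'_mk'']

/-- there exists a family of `G`-equivariant bijections
`(μᵢ : G/Sᵢ → G/Tᵢ)` commuting with the natural projections if and only if the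
slices `S̄` and `T̄` are conjugate in `G`. -/
theorem iso_iff_conjugate {n : ℕ} [Group G] [Finite G]
    (S T : Fin (n + 1) → Subgroup G) (hS : Monotone S) (hT : Monotone T) :
    (∃ μ : ∀ i : Fin (n + 1), G ⧸ S i ≃ G ⧸ T i,
        (∀ (i : Fin (n + 1)) (g : G) (y : G ⧸ S i), μ i (g • y) = g • μ i y) ∧
        ∀ i : Fin n,
          (μ i.succ) ∘ cosetProj (hS (Fin.castSucc_lt_succ : i.castSucc < i.succ).le) =
            cosetProj (hT (Fin.castSucc_lt_succ : i.castSucc < i.succ).le) ∘ (μ i.castSucc)) ↔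
      ∃ g : G, ∀ i, sliceConj g S i = T i := by
  constructor
  · rintro ⟨μ, hequiv, hproj⟩
    choose c hc using fun i => QuotientGroup.mk_surjective (μ i (QuotientGroup.mk 1))
    -- key stabilizer computation
    have key : ∀ (i) (x : G), x ∈ S i ↔ (c i)⁻¹ * x * c i ∈ T i := by
      intro i x
      have hmu : μ i (QuotientGroup.mk x) = QuotientGroup.mk (x * c i) := by
        have h1 : (QuotientGroup.mk x : G ⧸ S i) = x • (QuotientGroup.mk 1) := by
          rw [MulAction.Quotient.smul_mk, smul_eq_mul, mul_one]
        rw [h1, hequiv i x _, ← hc i, MulAction.Quotient.smul_mk, smul_eq_mul]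
      constructor
      · intro hx
        have hx1 : (QuotientGroup.mk x : G ⧸ S i) = QuotientGroup.mk 1 :=
          QuotientGroup.eq.mpr (by simpa using inv_mem hx)
        have h2 : (QuotientGroup.mk (x * c i) : G ⧸ T i) = QuotientGroup.mk (c i) := by
          rw [← hmu, hx1, hc i]
        have h3 := QuotientGroup.eq.mp h2
        have := inv_mem h3
        simpa [mul_assoc] using this
      · intro hx
        have heq : (QuotientGroup.mk (c i) : G ⧸ T i) = QuotientGroup.mk (x * c i) := by
          rw [QuotientGroup.eq]
          simpa [mul_assoc] using hx
        have h4 : μ i (QuotientGroup.mk x) = μ i (QuotientGroup.mk 1) := by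
          rw [hmu, ← heq, hc i]
        have h5 := (μ i).injective h4
        have h6 := QuotientGroup.eq.mp h5
        simpa using inv_mem h6
    -- the chain relation between consecutive representatives
    have chain : ∀ i : Fin n, (c i.succ)⁻¹ * c i.castSucc ∈ T i.succ := by
      intro i
      have h := congrFun (hproj i) (QuotientGroup.mk 1 : G ⧸ S i.castSucc)
      simp only [Function.comp_apply, cosetProj_mk] at h
      rw [← hc i.succ, ← hc i.castSucc, cosetProj_mk] at h
      exact QuotientGroup.eq.mp h
    have main : ∀ i, (c i)⁻¹ * c 0 ∈ T i := by
      intro i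
      induction i using Fin.induction with
      | zero => simpa using one_mem (T 0)
      | succ i ih =>
          have h1 : (c i.succ)⁻¹ * c i.castSucc ∈ T i.succ := chain i
          have h2 : (c i.castSucc)⁻¹ * c 0 ∈ T i.succ :=
            hT (Fin.castSucc_lt_succ : i.castSucc < i.succ).le ih
          have := mul_mem h1 h2
          simpa [mul_assoc] using this
    refine ⟨(c 0)⁻¹, fun i => ?_⟩
    ext x
    rw [show sliceConj (c 0)⁻¹ S i = (S i).map (MulAut.conj (c 0)⁻¹).toMonoidHom from rfl]
    rw [Subgroup.mem_map_equiv]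
    have hsymm : (MulAut.conj (c 0)⁻¹ : G ≃* G).symm x = c 0 * x * (c 0)⁻¹ := by
      simp [MulAut.conj]
    rw [hsymm, key i]
    set t := (c i)⁻¹ * c 0 with ht
    have hmem : t ∈ T i := main i
    have hrw : (c i)⁻¹ * (c 0 * x * (c 0)⁻¹) * c i = t * x * t⁻¹ := by
      rw [ht]; group
    rw [hrw]
    constructor
    · intro h
      have := mul_mem (mul_mem (inv_mem hmem) h) hmem
      simpa [mul_assoc] using this
    · intro h
      exact mul_mem (mul_mem hmem h) (inv_mem hmem)
  · rintro ⟨g, hg⟩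
    refine ⟨fun i => conjCosetEquiv g (hg i), ?_, ?_⟩
    · intro i a y
      induction y using Quotient.inductionOn' with
      | h x =>
          show conjCosetEquiv g (hg i) (QuotientGroup.mk (a * x))
            = a • conjCosetEquiv g (hg i) (QuotientGroup.mk x)
          show (QuotientGroup.mk (a * x * g⁻¹) : G ⧸ T i)
            = a • (QuotientGroup.mk (x * g⁻¹) : G ⧸ T i)
          rw [MulAction.Quotient.smul_mk]
          congr 1
          simp [smul_eq_mul, mul_assoc]
    · intro i
      funext y
      induction y using Quotient.inductionOn' with
      | h x => rfl
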